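/- Let Λ be an artin algebra and q a class of indecomposable finite length Λ-modules that is closed under successors and numerically determined by an additive function δ: K₀(Λ) → ℤ (an indecomposable finite length module M lies in q iff δ(M) > 0). If N is a Λ-module with Hom(Q,N) = 0 for all Q in q and N has a finite length submodule U such that N/U is generated by q, then N has finite length. -/

import Mathlib

universe u v

/-- `g(q)`: the class of modules generated by `q`. -/
def genBy {Λ : Type u} [Ring Λ] (q : Set (ModuleCat.{v} Λ)) : Set (ModuleCat.{v} Λ) :=
  {M | ∃ (ι : Type v) (N : ι → ModuleCat.{v} Λ), (∀ i, N i ∈ q) ∧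
    ∃ f : (DirectSum ι fun i => ↥(N i)) →ₗ[Λ] M, Function.Surjective f}

/-- A module is indecomposable: it is non-zero and admits no non-trivial direct sum
decomposition. -/
def Indec {Λ : Type u} [Ring Λ] (M : ModuleCat.{v} Λ) : Prop :=
  Nontrivial ↥M ∧ ∀ U V : Submodule Λ M, IsCompl U V → U = ⊥ ∨ V = ⊥

section Aux

theorem myFlSub {Λ : Type u} [Ring Λ] {M : Type v} [AddCommGroup M] [Module Λ M]
    (h : IsFiniteLength Λ M) (A : Submodule Λ M) : IsFiniteLength Λ A := by
  obtain ⟨h1, h2⟩ := isFiniteLength_iff_isNoetherian_isArtinian.mp h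
  exact isFiniteLength_iff_isNoetherian_isArtinian.mpr ⟨inferInstance, inferInstance⟩

theorem myFlQuot {Λ : Type u} [Ring Λ] {M : Type v} [AddCommGroup M] [Module Λ M]
    (h : IsFiniteLength Λ M) (A : Submodule Λ M) : IsFiniteLength Λ (M ⧸ A) := by
  obtain ⟨h1, h2⟩ := isFiniteLength_iff_isNoetherian_isArtinian.mp h
  exact isFiniteLength_iff_isNoetherian_isArtinian.mpr ⟨inferInstance, inferInstance⟩

theorem myFlExt {Λ : Type u} [Ring Λ] {M : Type v} [AddCommGroup M] [Module Λ M]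
    (A : Submodule Λ M) (h1 : IsFiniteLength Λ A) (h2 : IsFiniteLength Λ (M ⧸ A)) :
    IsFiniteLength Λ M := by
  obtain ⟨n1, a1⟩ := isFiniteLength_iff_isNoetherian_isArtinian.mp h1
  obtain ⟨n2, a2⟩ := isFiniteLength_iff_isNoetherian_isArtinian.mp h2
  exact isFiniteLength_iff_isNoetherian_isArtinian.mpr
    ⟨(isNoetherian_iff_submodule_quotient A).mpr ⟨n1, n2⟩,
     (isArtinian_iff_submodule_quotient A).mpr ⟨a1, a2⟩⟩

/-- A linear equivalence between any two subsingleton modules. -/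
def subsingletonEquiv {Λ : Type u} [Ring Λ] (M N : Type v) [AddCommGroup M] [Module Λ M]
    [AddCommGroup N] [Module Λ N] [Subsingleton M] [Subsingleton N] : M ≃ₗ[Λ] N where
  toFun _ := 0
  invFun _ := 0
  left_inv _ := Subsingleton.elim _ _
  right_inv _ := Subsingleton.elim _ _
  map_add' _ _ := Subsingleton.elim _ _
  map_smul' _ _ := Subsingleton.elim _ _

/-- Dimension over the base field `k`, used as an induction measure. -/
noncomputable def kdim (k : Type u) [Field k] (Λ : Type u) [Ring Λ] [Algebra k Λ]
    (M : Type v) [AddCommGroup M] [Module Λ M] : ℕ :=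
  letI : Module k M := Module.compHom M (algebraMap k Λ)
  Module.finrank k M

theorem kdim_lt {k : Type u} [Field k] {Λ : Type u} [Ring Λ] [Algebra k Λ]
    [FiniteDimensional k Λ] {M : Type v} [AddCommGroup M] [Module Λ M]
    (hM : IsFiniteLength Λ M) {A : Submodule Λ M} (hA : A ≠ ⊤) :
    kdim k Λ A < kdim k Λ M := by
  letI : Module k M := Module.compHom M (algebraMap k Λ)
  haveI : IsScalarTower k Λ M := ⟨fun c a m => by
    show (c • a) • m = algebraMap k Λ c • (a • m)
    rw [Algebra.smul_def, mul_smul]⟩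
  haveI : IsNoetherian Λ M := (isFiniteLength_iff_isNoetherian_isArtinian.mp hM).1
  haveI : Module.Finite k M := Module.Finite.trans Λ M
  letI : Module k A := Module.compHom A (algebraMap k Λ)
  have e : A ≃ₗ[k] (A.restrictScalars k) :=
    { toFun := fun x => ⟨x.1, x.2⟩
      invFun := fun x => ⟨x.1, x.2⟩
      left_inv := fun _ => rfl
      right_inv := fun _ => rfl
      map_add' := fun _ _ => rfl
      map_smul' := fun _ _ => rfl }
  show Module.finrank k A < Module.finrank k M
  rw [e.finrank_eq]
  exact Submodule.finrank_lt (lt_top_iff_ne_top.mpr (fun h =>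
    hA ((Submodule.restrictScalars_eq_top_iff k Λ M).mp h))).ne

end Aux

/-- Proposition 1 (a): Let `Λ` be an artin algebra (a finite dimensional algebra over a
field) and `q` a class of indecomposable finite length `Λ`-modules which is closed under
successors and numerically determined by an additive function `δ` on the Grothendieck
group of finite length modules (an indecomposable finite length module `M` belongs to
`q` iff `δ(M) > 0`). If `N` is a `Λ`-module with `Hom(q, N) = 0` possessing a finite
length submodule `U` such that `N/U` is generated by `q`, then `N` has finite length. -/
theorem stmt_9 {k : Type u} [Field k] {Λ : Type u} [Ring Λ] [Algebra k Λ]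
    [FiniteDimensional k Λ] (q : Set (ModuleCat.{v} Λ))
    (hq : ∀ Q ∈ q, IsFiniteLength Λ ↥Q ∧ Indec Q)
    -- `q` is closed under successors
    (hsucc : ∀ M₁ ∈ q, ∀ M₂ : ModuleCat.{v} Λ, IsFiniteLength Λ ↥M₂ → Indec M₂ →
      (∃ f : M₁ →ₗ[Λ] M₂, f ≠ 0) → M₂ ∈ q)
    -- `δ` is additive on short exact sequences of finite length modules
    (δ : ModuleCat.{v} Λ → ℤ)
    (hiso : ∀ M N : ModuleCat.{v} Λ, IsFiniteLength Λ ↥M → (↥M ≃ₗ[Λ] ↥N) → δ M = δ N)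
    (hadd : ∀ (M : ModuleCat.{v} Λ), IsFiniteLength Λ ↥M → ∀ U : Submodule Λ M,
      δ M = δ (ModuleCat.of Λ U) + δ (ModuleCat.of Λ (↥M ⧸ U)))
    -- `q` is numerically determined by `δ`
    (hnum : ∀ M : ModuleCat.{v} Λ, IsFiniteLength Λ ↥M → Indec M → (M ∈ q ↔ 0 < δ M))
    -- the module `N`
    (N : ModuleCat.{v} Λ)
    (hN : ∀ Q ∈ q, ∀ f : Q →ₗ[Λ] N, f = 0)
    (U : Submodule Λ N) (hU : IsFiniteLength Λ ↥U)
    (hNU : ModuleCat.of Λ (↥N ⧸ U) ∈ genBy q) :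
    IsFiniteLength Λ ↥N := by
  classical
  have flQ : ∀ Q ∈ q, IsFiniteLength Λ ↥Q := fun Q hQ => (hq Q hQ).1
  -- δ of a subsingleton module is 0
  have δ0 : ∀ M : ModuleCat.{v} Λ, Subsingleton ↥M → δ M = 0 := by
    intro M hs
    haveI := hs
    have fl : IsFiniteLength Λ ↥M := .of_subsingleton
    have h1 := hadd M fl ⊥
    haveI i1 : Subsingleton ↥(ModuleCat.of Λ (↥(⊥ : Submodule Λ M))) :=
      ⟨fun a b => Subtype.ext (Subsingleton.elim _ _)⟩
    have hq2 : ∀ a b : ↥M ⧸ (⊥ : Submodule Λ M), a = b := fun a b => by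
      obtain ⟨x, rfl⟩ := Submodule.mkQ_surjective _ a
      obtain ⟨y, rfl⟩ := Submodule.mkQ_surjective _ b
      rw [Subsingleton.elim x y]
    haveI i2 : Subsingleton ↥(ModuleCat.of Λ (↥M ⧸ (⊥ : Submodule Λ M))) := ⟨hq2⟩
    have h2 : δ (ModuleCat.of Λ (↥(⊥ : Submodule Λ M))) = δ M :=
      hiso _ _ .of_subsingleton (subsingletonEquiv _ _)
    have h3 : δ (ModuleCat.of Λ (↥M ⧸ (⊥ : Submodule Λ M))) = δ M :=
      hiso _ _ .of_subsingleton (subsingletonEquiv _ _)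
    linarith
  -- a non-Indec nontrivial module splits nontrivially
  have split : ∀ M : ModuleCat.{v} Λ, Nontrivial ↥M → ¬ Indec M →
      ∃ A B : Submodule Λ M, IsCompl A B ∧ A ≠ ⊥ ∧ B ≠ ⊥ := by
    intro M hnt hind
    have : ¬ ∀ A B : Submodule Λ M, IsCompl A B → A = ⊥ ∨ B = ⊥ :=
      fun h => hind ⟨hnt, h⟩
    push_neg at this
    obtain ⟨A, B, hc, hA, hB⟩ := this
    exact ⟨A, B, hc, hA, hB⟩
  have ne_top_left : ∀ (M : Type v) [AddCommGroup M] [Module Λ M],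
      ∀ A B : Submodule Λ M, IsCompl A B → B ≠ ⊥ → A ≠ ⊤ := by
    intro M _ _ A B hc hB hA
    subst hA
    exact hB (disjoint_top.mp hc.disjoint.symm)
  -- Lemma A: finite length modules embedding into N have δ ≤ 0
  have lemA : ∀ (n : ℕ) (M : ModuleCat.{v} Λ), IsFiniteLength Λ ↥M → kdim k Λ ↥M ≤ n →
      (∃ f : ↥M →ₗ[Λ] ↥N, Function.Injective f) → δ M ≤ 0 := by
    intro n
    induction n using Nat.strong_induction_on with
    | _ n ih =>
      rintro M flM hdim ⟨f, hf⟩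
      by_cases hs : Subsingleton ↥M
      · rw [δ0 M hs]
      have hnt : Nontrivial ↥M := not_subsingleton_iff_nontrivial.mp hs
      by_cases hind : Indec M
      · have hMq : M ∉ q := by
          intro hMq
          have h0 := hN M hMq f
          exact hs ⟨fun a b => hf (by simp [h0])⟩
        exact not_lt.1 fun hpos => hMq ((hnum M flM hind).mpr hpos)
      · obtain ⟨A, B, hc, hA, hB⟩ := split M hnt hind
        have hAtop : A ≠ ⊤ := ne_top_left ↥M A B hc hB
        have hBtop : B ≠ ⊤ := ne_top_left ↥M B A hc.symm hA
        have dA : δ (ModuleCat.of Λ A) ≤ 0 :=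
          ih (kdim k Λ A) (lt_of_lt_of_le (kdim_lt flM hAtop) hdim)
            (ModuleCat.of Λ A) (myFlSub flM A) le_rfl
            ⟨f.comp A.subtype, hf.comp (Submodule.injective_subtype A)⟩
        have dB : δ (ModuleCat.of Λ B) ≤ 0 :=
          ih (kdim k Λ B) (lt_of_lt_of_le (kdim_lt flM hBtop) hdim)
            (ModuleCat.of Λ B) (myFlSub flM B) le_rfl
            ⟨f.comp B.subtype, hf.comp (Submodule.injective_subtype B)⟩
        have h1 := hadd M flM A
        have h2 : δ (ModuleCat.of Λ (↥M ⧸ A)) = δ (ModuleCat.of Λ B) :=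
          hiso _ _ (myFlQuot flM A) (Submodule.quotientEquivOfIsCompl A B hc)
        linarith
  have lemA' : ∀ (M : ModuleCat.{v} Λ), IsFiniteLength Λ ↥M →
      (∃ f : ↥M →ₗ[Λ] ↥N, Function.Injective f) → δ M ≤ 0 :=
    fun M h1 h2 => lemA (kdim k Λ ↥M) M h1 le_rfl h2
  -- Lemma B: nontrivial finite length quotients of modules in q have δ ≥ 1
  have lemB : ∀ (n : ℕ) (X : ModuleCat.{v} Λ), IsFiniteLength Λ ↥X → kdim k Λ ↥X ≤ n →
      Nontrivial ↥X → (∃ Q ∈ q, ∃ g : ↥Q →ₗ[Λ] ↥X, Function.Surjective g) → 1 ≤ δ X := by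
    intro n
    induction n using Nat.strong_induction_on with
    | _ n ih =>
      rintro X flX hdim hnt ⟨Q, hQ, g, hg⟩
      by_cases hind : Indec X
      · have hg0 : g ≠ 0 := by
          intro h0
          obtain ⟨y, hy⟩ := exists_ne (0 : ↥X)
          obtain ⟨x, rfl⟩ := hg y
          exact hy (by rw [h0]; rfl)
        have hXq : X ∈ q := hsucc Q hQ X flX hind ⟨g, hg0⟩
        have := (hnum X flX hind).mp hXq
        omega
      · have hnt' := hnt
        obtain ⟨A, B, hc, hA, hB⟩ := split X hnt hind
        have hAtop : A ≠ ⊤ := ne_top_left ↥X A B hc hB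
        have hBtop : B ≠ ⊤ := ne_top_left ↥X B A hc.symm hA
        have projA : Function.Surjective ⇑(Submodule.linearProjOfIsCompl A B hc) :=
          fun a => ⟨↑a, Submodule.linearProjOfIsCompl_apply_left hc a⟩
        have surjA : Function.Surjective
            ⇑((Submodule.linearProjOfIsCompl A B hc).comp g) := by
          rw [LinearMap.coe_comp]; exact projA.comp hg
        have projB : Function.Surjective ⇑(Submodule.linearProjOfIsCompl B A hc.symm) :=
          fun a => ⟨↑a, Submodule.linearProjOfIsCompl_apply_left hc.symm a⟩
        have surjB : Function.Surjective
            ⇑((Submodule.linearProjOfIsCompl B A hc.symm).comp g) := by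
          rw [LinearMap.coe_comp]; exact projB.comp hg
        have dA : 1 ≤ δ (ModuleCat.of Λ A) :=
          ih (kdim k Λ A) (lt_of_lt_of_le (kdim_lt flX hAtop) hdim)
            (ModuleCat.of Λ A) (myFlSub flX A) le_rfl
            (Submodule.nontrivial_iff_ne_bot.mpr hA)
            ⟨Q, hQ, _, surjA⟩
        have dB : 1 ≤ δ (ModuleCat.of Λ B) :=
          ih (kdim k Λ B) (lt_of_lt_of_le (kdim_lt flX hBtop) hdim)
            (ModuleCat.of Λ B) (myFlSub flX B) le_rfl
            (Submodule.nontrivial_iff_ne_bot.mpr hB)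
            ⟨Q, hQ, _, surjB⟩
        have h1 := hadd X flX A
        have h2 : δ (ModuleCat.of Λ (↥X ⧸ A)) = δ (ModuleCat.of Λ B) :=
          hiso _ _ (myFlQuot flX A) (Submodule.quotientEquivOfIsCompl A B hc)
        linarith
  have lemB' : ∀ (X : ModuleCat.{v} Λ), IsFiniteLength Λ ↥X → Nontrivial ↥X →
      (∃ Q ∈ q, ∃ g : ↥Q →ₗ[Λ] ↥X, Function.Surjective g) → 1 ≤ δ X :=
    fun X h1 h2 h3 => lemB (kdim k Λ ↥X) X h1 le_rfl h2 h3
  -- Step: enlarge a finite length submodule, increasing δ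
  have step : ∀ V : Submodule Λ ↥N, IsFiniteLength Λ ↥V →
      ModuleCat.of Λ (↥N ⧸ V) ∈ genBy q → Nontrivial (↥N ⧸ V) →
      ∃ V' : Submodule Λ ↥N, IsFiniteLength Λ ↥V' ∧
        ModuleCat.of Λ (↥N ⧸ V') ∈ genBy q ∧
        δ (ModuleCat.of Λ V) + 1 ≤ δ (ModuleCat.of Λ V') := by
    intro V flV hgen hnt
    obtain ⟨ι, Q, hQ, f, hf⟩ := hgen
    obtain ⟨y, hy⟩ := exists_ne (0 : ↥N ⧸ V)
    obtain ⟨x, rfl⟩ := hf y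
    have hx : ∃ i, f (DirectSum.lof Λ ι (fun j => ↥(Q j)) i (x i)) ≠ 0 := by
      by_contra hc
      push_neg at hc
      apply hy
      rw [← DirectSum.sum_support_of x, map_sum]
      exact Finset.sum_eq_zero fun i _ => hc i
    obtain ⟨i, hi⟩ := hx
    set g : ↥(Q i) →ₗ[Λ] (↥N ⧸ V) := f.comp (DirectSum.lof Λ ι (fun j => ↥(Q j)) i) with hgdef
    set X : Submodule Λ (↥N ⧸ V) := LinearMap.range g with hXdef
    have hXnt : Nontrivial ↥X := Submodule.nontrivial_iff_ne_bot.mpr (by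
      intro h
      apply hi
      have hmem : g (x i) ∈ X := LinearMap.mem_range_self _ _
      rw [h, Submodule.mem_bot] at hmem
      exact hmem)
    have flX : IsFiniteLength Λ ↥X :=
      (g.quotKerEquivRange).isFiniteLength (myFlQuot (flQ (Q i) (hQ i)) _)
    have hδX : 1 ≤ δ (ModuleCat.of Λ X) :=
      lemB' (ModuleCat.of Λ X) flX hXnt
        ⟨Q i, hQ i, g.rangeRestrict, LinearMap.surjective_rangeRestrict g⟩
    set V' : Submodule Λ ↥N := X.comap V.mkQ with hV'def
    have hVV' : V ≤ V' := by
      intro v hv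
      show V.mkQ v ∈ X
      rw [show V.mkQ v = 0 from (Submodule.Quotient.mk_eq_zero V).mpr hv]
      exact X.zero_mem
    set W : Submodule Λ ↥(ModuleCat.of Λ V') := V.comap V'.subtype with hWdef
    have e1 : ↥W ≃ₗ[Λ] ↥V := Submodule.comapSubtypeEquivOfLe hVV'
    set φ : ↥V' →ₗ[Λ] ↥X :=
      LinearMap.codRestrict X (V.mkQ.comp V'.subtype) (fun c => c.2) with hφdef
    have hφsurj : Function.Surjective φ := by
      rintro ⟨xv, hxv⟩
      obtain ⟨n₀, hn₀⟩ := V.mkQ_surjective xv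
      refine ⟨⟨n₀, ?_⟩, ?_⟩
      · show V.mkQ n₀ ∈ X
        rw [hn₀]; exact hxv
      · apply Subtype.ext
        exact hn₀
    have hφker : LinearMap.ker φ = W := by
      ext v
      constructor
      · intro hv
        have : V.mkQ (v : ↥N) = 0 := by
          have := congrArg (Subtype.val) (show φ v = 0 from hv)
          exact this
        exact (Submodule.Quotient.mk_eq_zero V).mp this
      · intro hv
        have : V.mkQ (v : ↥N) = 0 := (Submodule.Quotient.mk_eq_zero V).mpr hv
        apply Subtype.ext
        exact this
    have e2 : (↥V' ⧸ W) ≃ₗ[Λ] ↥X :=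
      (Submodule.quotEquivOfEq W (LinearMap.ker φ) hφker.symm).trans
        (LinearMap.quotKerEquivOfSurjective φ hφsurj)
    have flW : IsFiniteLength Λ ↥W := e1.symm.isFiniteLength flV
    have flV' : IsFiniteLength Λ ↥V' := myFlExt W flW (e2.symm.isFiniteLength flX)
    refine ⟨V', flV', ?_, ?_⟩
    · have hπsurj : Function.Surjective
          ⇑(Submodule.mapQ V V' LinearMap.id (fun z hz => hVV' hz)) := by
        intro z
        obtain ⟨n₀, rfl⟩ := V'.mkQ_surjective z
        refine ⟨V.mkQ n₀, ?_⟩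
        rw [Submodule.mkQ_apply, Submodule.mkQ_apply, Submodule.mapQ_apply]
        rfl
      refine ⟨ι, Q, hQ, (Submodule.mapQ V V' LinearMap.id (fun z hz => hVV' hz)).comp f, ?_⟩
      intro z
      obtain ⟨w, hw⟩ := hπsurj z
      obtain ⟨d, rfl⟩ := hf w
      exact ⟨d, hw⟩
    · have h1 := hadd (ModuleCat.of Λ V') flV' W
      have h2 : δ (ModuleCat.of Λ W) = δ (ModuleCat.of Λ V) := hiso _ _ flW e1
      have h3 : δ (ModuleCat.of Λ (↥(ModuleCat.of Λ V') ⧸ W)) = δ (ModuleCat.of Λ X) :=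
        hiso _ _ (myFlQuot flV' W) e2
      linarith
  -- Main induction
  have main : ∀ (n : ℕ) (V : Submodule Λ ↥N), IsFiniteLength Λ ↥V →
      ModuleCat.of Λ (↥N ⧸ V) ∈ genBy q → -(n : ℤ) ≤ δ (ModuleCat.of Λ V) →
      IsFiniteLength Λ ↥N := by
    intro n
    induction n with
    | zero =>
      intro V flV hgen hb
      by_cases hs : Subsingleton (↥N ⧸ V)
      · have hVt : V = ⊤ := Submodule.Quotient.subsingleton_iff.mp hs
        rw [hVt] at flV
        exact Submodule.topEquiv.isFiniteLength flV
      · obtain ⟨V', flV', hg', hδ'⟩ := step V flV hgen (not_subsingleton_iff_nontrivial.mp hs)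
        have hA := lemA' (ModuleCat.of Λ V') flV' ⟨V'.subtype, V'.injective_subtype⟩
        exfalso
        simp only [Nat.cast_zero, neg_zero] at hb
        linarith
    | succ n ih =>
      intro V flV hgen hb
      by_cases hs : Subsingleton (↥N ⧸ V)
      · have hVt : V = ⊤ := Submodule.Quotient.subsingleton_iff.mp hs
        rw [hVt] at flV
        exact Submodule.topEquiv.isFiniteLength flV
      · obtain ⟨V', flV', hg', hδ'⟩ := step V flV hgen (not_subsingleton_iff_nontrivial.mp hs)
        refine ih V' flV' hg' ?_
        push_cast at hb ⊢
        linarith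
  refine main (δ (ModuleCat.of Λ U)).natAbs U hU hNU ?_
  have h := neg_abs_le (δ (ModuleCat.of Λ U))
  rwa [Int.abs_eq_natAbs] at h
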